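/- Let p, q, r be pairwise coprime integers greater than 1, and for coprime a, b let a⁻¹(b) denote the inverse of a modulo b taken in {1,...,b-1}. Then exactly one or exactly two of the three inequalities q⁻¹(p) + r⁻¹(p) > p, r⁻¹(q) + p⁻¹(q) > q, p⁻¹(r) + q⁻¹(r) > r hold (i.e., the number of these inequalities that hold is 1 or 2). -/
import Mathlib

lemma key_inv (p q a b : ℕ) (hp : 1 < p) (hq : 1 < q) (hpq : Nat.Coprime p q)
    (ha : 1 ≤ a) (ha' : a ≤ p - 1) (hqa : q * a ≡ 1 [MOD p])
    (hb : 1 ≤ b) (hb' : b ≤ q - 1) (hpb : p * b ≡ 1 [MOD q]) :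
    q * a + p * b = p * q + 1 := by
  have h1 : q * a + p * b ≡ 1 [MOD p] := by
    have : p * b ≡ 0 [MOD p] := (Nat.modEq_zero_iff_dvd).mpr ⟨b, rfl⟩
    simpa using hqa.add this
  have h2 : q * a + p * b ≡ 1 [MOD q] := by
    have : q * a ≡ 0 [MOD q] := (Nat.modEq_zero_iff_dvd).mpr ⟨a, rfl⟩
    simpa using this.add hpb
  have h3 : q * a + p * b ≡ 1 [MOD p * q] :=
    (Nat.modEq_and_modEq_iff_modEq_mul hpq).mp ⟨h1, h2⟩
  have hmod : (q * a + p * b) % (p * q) = 1 := by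
    have h4 : (q * a + p * b) % (p * q) = 1 % (p * q) := h3
    rwa [Nat.one_mod_eq_one.mpr (by nlinarith)] at h4
  have hdiv := Nat.div_add_mod (q * a + p * b) (p * q)
  rw [hmod] at hdiv
  set k := (q * a + p * b) / (p * q) with hk
  have hub : q * a + p * b + p + q ≤ 2 * (p * q) := by
    have h5 : a + 1 ≤ p := by omega
    have h6 : b + 1 ≤ q := by omega
    have h7 : q * (a + 1) ≤ q * p := Nat.mul_le_mul_left q h5
    have h8 : p * (b + 1) ≤ p * q := Nat.mul_le_mul_left p h6
    nlinarith
  have hlb : p + q ≤ q * a + p * b := by nlinarith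
  have hk1 : k = 1 := by
    rcases Nat.lt_or_ge k 1 with h | h
    · interval_cases k; omega
    rcases Nat.lt_or_ge k 2 with h' | h'
    · omega
    · exfalso
      have : p * q * 2 ≤ p * q * k := Nat.mul_le_mul_left _ h'
      omega
  rw [hk1] at hdiv
  omega

set_option maxHeartbeats 1000000 in
/-- For pairwise coprime `p, q, r > 1`, with all six modular inverses taken in
`{1,...,modulus-1}`, exactly one or exactly two of the three inequalities
`q⁻¹(p)+r⁻¹(p) > p`, `r⁻¹(q)+p⁻¹(q) > q`, `p⁻¹(r)+q⁻¹(r) > r` hold. -/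
theorem stmt1 (p q r : ℕ) (hp : 1 < p) (hq : 1 < q) (hr : 1 < r)
    (hpq : Nat.Coprime p q) (hqr : Nat.Coprime q r) (hrp : Nat.Coprime r p)
    (iqp irp irq ipq ipr iqr : ℕ)
    (hiqp : 1 ≤ iqp ∧ iqp ≤ p - 1 ∧ q * iqp ≡ 1 [MOD p])
    (hirp : 1 ≤ irp ∧ irp ≤ p - 1 ∧ r * irp ≡ 1 [MOD p])
    (hirq : 1 ≤ irq ∧ irq ≤ q - 1 ∧ r * irq ≡ 1 [MOD q])
    (hipq : 1 ≤ ipq ∧ ipq ≤ q - 1 ∧ p * ipq ≡ 1 [MOD q])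
    (hipr : 1 ≤ ipr ∧ ipr ≤ r - 1 ∧ p * ipr ≡ 1 [MOD r])
    (hiqr : 1 ≤ iqr ∧ iqr ≤ r - 1 ∧ q * iqr ≡ 1 [MOD r]) :
    (if iqp + irp > p then 1 else 0) + (if irq + ipq > q then 1 else 0)
      + (if ipr + iqr > r then 1 else 0) = 1 ∨
    (if iqp + irp > p then 1 else 0) + (if irq + ipq > q then 1 else 0)
      + (if ipr + iqr > r then 1 else 0) = 2 := by
  obtain ⟨ha1, ha2, ha3⟩ := hiqp
  obtain ⟨hb1, hb2, hb3⟩ := hirp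
  obtain ⟨hc1, hc2, hc3⟩ := hirq
  obtain ⟨hd1, hd2, hd3⟩ := hipq
  obtain ⟨he1, he2, he3⟩ := hipr
  obtain ⟨hf1, hf2, hf3⟩ := hiqr
  have h1 : q * iqp + p * ipq = p * q + 1 :=
    key_inv p q iqp ipq hp hq hpq ha1 ha2 ha3 hd1 hd2 hd3
  have h2 : r * irp + p * ipr = p * r + 1 :=
    key_inv p r irp ipr hp hr hrp.symm hb1 hb2 hb3 he1 he2 he3
  have h3 : r * irq + q * iqr = q * r + 1 :=
    key_inv q r irq iqr hq hr hqr hc1 hc2 hc3 hf1 hf2 hf3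
  have big : (q:ℤ) * r * (iqp + irp) + p * r * (ipq + irq) + p * q * (ipr + iqr)
      = 3 * (p * q * r) + (p + q + r) := by
    have h1' : (q:ℤ) * iqp + p * ipq = p * q + 1 := by exact_mod_cast h1
    have h2' : (r:ℤ) * irp + p * ipr = p * r + 1 := by exact_mod_cast h2
    have h3' : (r:ℤ) * irq + q * iqr = q * r + 1 := by exact_mod_cast h3
    linear_combination (r:ℤ) * h1' + (q:ℤ) * h2' + (p:ℤ) * h3'
  have bigN : q * r * (iqp + irp) + p * r * (ipq + irq) + p * q * (ipr + iqr)
      = 3 * (p * q * r) + (p + q + r) := by exact_mod_cast big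
  split_ifs with e1 e2 e3
  · -- all three hold: contradiction
    exfalso
    have m1 : q * r * (p + 1) ≤ q * r * (iqp + irp) :=
      Nat.mul_le_mul_left _ (by omega)
    have m2 : p * r * (q + 1) ≤ p * r * (ipq + irq) :=
      Nat.mul_le_mul_left _ (by omega)
    have m3 : p * q * (r + 1) ≤ p * q * (ipr + iqr) :=
      Nat.mul_le_mul_left _ (by omega)
    have g1 : 2 * q ≤ p * q := Nat.mul_le_mul_right q hp
    have g2 : 2 * r ≤ q * r := Nat.mul_le_mul_right r hq
    have g3 : p * 2 ≤ p * r := Nat.mul_le_mul_left p hr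
    nlinarith [bigN, m1, m2, m3, g1, g2, g3]
  · omega
  · omega
  · omega
  · omega
  · omega
  · omega
  · -- none holds: contradiction
    exfalso
    have m1 : q * r * (iqp + irp) ≤ q * r * p := Nat.mul_le_mul_left _ (by omega)
    have m2 : p * r * (ipq + irq) ≤ p * r * q := Nat.mul_le_mul_left _ (by omega)
    have m3 : p * q * (ipr + iqr) ≤ p * q * r := Nat.mul_le_mul_left _ (by omega)
    have g0 : 0 < p + q + r := by omega
    nlinarith [bigN, m1, m2, m3, g0]
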